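/- Let n be a positive integer. Define g : ℝⁿ → ℝ by g(x) = ∑ i, (x i)² / (1 + (x i)²). Then for every fixed u ∈ ℝⁿ, the function h(x) = g(x) + (1/2)‖x - u‖² is convex on ℝⁿ. -/

import Mathlib

open Real

lemma stmt9_aux_hasDeriv (c : ℝ) (t : ℝ) :
    HasDerivAt (fun t : ℝ => t ^ 2 / (1 + t ^ 2) + (1 / 2) * (t - c) ^ 2)
      (2 * t / (1 + t ^ 2) ^ 2 + (t - c)) t := by
  have hne : (1 + t ^ 2) ≠ 0 := by positivity
  have h1 : HasDerivAt (fun t : ℝ => t ^ 2 / (1 + t ^ 2))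
      ((2 * t * (1 + t ^ 2) - t ^ 2 * (2 * t)) / (1 + t ^ 2) ^ 2) t := by
    have ha : HasDerivAt (fun t : ℝ => t ^ 2) (2 * t) t := by
      simpa using (hasDerivAt_pow 2 t)
    have hb : HasDerivAt (fun t : ℝ => 1 + t ^ 2) (2 * t) t := by
      exact ha.const_add 1
    exact ha.div hb hne
  have h2 : HasDerivAt (fun t : ℝ => (1 / 2) * (t - c) ^ 2) (t - c) t := by
    have ha : HasDerivAt (fun t : ℝ => t - c) 1 t := by
      simpa using (hasDerivAt_id t).sub_const c
    have := (ha.pow 2).const_mul (1 / 2 : ℝ)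
    refine this.congr_deriv ?_
    simp only [Nat.cast_ofNat, Nat.add_one_sub_one, pow_one]; ring
  have := h1.add h2
  refine this.congr_deriv ?_
  congr 2
  ring

lemma stmt9_aux_hasDeriv2 (c : ℝ) (t : ℝ) :
    HasDerivAt (fun t : ℝ => 2 * t / (1 + t ^ 2) ^ 2 + (t - c))
      ((2 * (1 + t ^ 2) ^ 2 - 2 * t * (2 * (1 + t ^ 2) * (2 * t))) / ((1 + t ^ 2) ^ 2) ^ 2 + 1) t := by
  have hne : ((1 + t ^ 2) ^ 2 : ℝ) ≠ 0 := by positivity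
  have ha : HasDerivAt (fun t : ℝ => 2 * t) 2 t := by
    simpa using (hasDerivAt_id t).const_mul (2:ℝ)
  have hb : HasDerivAt (fun t : ℝ => (1 + t ^ 2) ^ 2) (2 * (1 + t ^ 2) * (2 * t)) t := by
    have h0 : HasDerivAt (fun t : ℝ => 1 + t ^ 2) (2 * t) t := by
      exact (by simpa using hasDerivAt_pow 2 t : HasDerivAt (fun t : ℝ => t ^ 2) (2 * t) t).const_add 1
    have := h0.pow 2
    refine this.congr_deriv ?_
    simp only [Nat.cast_ofNat, Nat.add_one_sub_one, pow_one]
  have hc : HasDerivAt (fun t : ℝ => t - c) 1 t := by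
    simpa using (hasDerivAt_id t).sub_const c
  exact (ha.div hb hne).add hc

lemma stmt9_aux (c : ℝ) :
    ConvexOn ℝ Set.univ (fun t : ℝ => t ^ 2 / (1 + t ^ 2) + (1 / 2) * (t - c) ^ 2) := by
  have hderiv : deriv (fun t : ℝ => t ^ 2 / (1 + t ^ 2) + (1 / 2) * (t - c) ^ 2)
      = fun t => 2 * t / (1 + t ^ 2) ^ 2 + (t - c) := by
    funext t
    exact (stmt9_aux_hasDeriv c t).deriv
  apply convexOn_univ_of_deriv2_nonneg
  · exact fun t => (stmt9_aux_hasDeriv c t).differentiableAt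
  · rw [hderiv]
    exact fun t => (stmt9_aux_hasDeriv2 c t).differentiableAt
  · intro t
    have h2 : deriv^[2] (fun t : ℝ => t ^ 2 / (1 + t ^ 2) + (1 / 2) * (t - c) ^ 2) t
        = (2 * (1 + t ^ 2) ^ 2 - 2 * t * (2 * (1 + t ^ 2) * (2 * t))) / ((1 + t ^ 2) ^ 2) ^ 2 + 1 := by
      show deriv (deriv _) t = _
      rw [hderiv]
      exact (stmt9_aux_hasDeriv2 c t).deriv
    rw [h2]
    have hpos : (0:ℝ) < ((1 + t ^ 2) ^ 2) ^ 2 := by positivity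
    rw [div_add' _ _ _ (ne_of_gt hpos)]
    apply div_nonneg _ (le_of_lt hpos)
    nlinarith [sq_nonneg t, sq_nonneg (t^2 - 1), sq_nonneg (t^3), sq_nonneg (t^2+1)]

theorem stmt_9 (n : ℕ) (hn : 0 < n)
    (g : EuclideanSpace ℝ (Fin n) → ℝ)
    (hg : ∀ x, g x = ∑ i, (x i) ^ 2 / (1 + (x i) ^ 2))
    (u : EuclideanSpace ℝ (Fin n)) :
    ConvexOn ℝ Set.univ (fun x => g x + (1 / 2) * ‖x - u‖ ^ 2) := by
  have hcoord : ∀ i : Fin n, ConvexOn ℝ (Set.univ : Set (EuclideanSpace ℝ (Fin n)))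
      (fun x : EuclideanSpace ℝ (Fin n) =>
        (x i) ^ 2 / (1 + (x i) ^ 2) + (1 / 2) * (x i - u i) ^ 2) := by
    intro i
    refine ⟨convex_univ, ?_⟩
    intro x _ y _ a b ha hb hab
    have hx : (a • x + b • y) i = a * x i + b * y i := by
      simp [PiLp.add_apply, PiLp.smul_apply, smul_eq_mul]
    simp only [hx]
    have := (stmt9_aux (u i)).2 (Set.mem_univ (x i)) (Set.mem_univ (y i)) ha hb hab
    simpa [smul_eq_mul] using this
  have hsum : ConvexOn ℝ (Set.univ : Set (EuclideanSpace ℝ (Fin n)))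
      (fun x : EuclideanSpace ℝ (Fin n) =>
        ∑ i, ((x i) ^ 2 / (1 + (x i) ^ 2) + (1 / 2) * (x i - u i) ^ 2)) := by
    have : ∀ s : Finset (Fin n), ConvexOn ℝ (Set.univ : Set (EuclideanSpace ℝ (Fin n)))
        (fun x : EuclideanSpace ℝ (Fin n) =>
          ∑ i ∈ s, ((x i) ^ 2 / (1 + (x i) ^ 2) + (1 / 2) * (x i - u i) ^ 2)) := by
      intro s
      induction s using Finset.induction with
      | empty => simpa using convexOn_const (0:ℝ) convex_univ
      | insert a s hne ih =>
        simp only [Finset.sum_insert hne]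
        exact (hcoord a).add ih
    exact this Finset.univ
  convert hsum using 2 with x
  rw [hg]
  have hnorm : ‖x - u‖ ^ 2 = ∑ i, (x i - u i) ^ 2 := by
    rw [EuclideanSpace.norm_eq]
    rw [Real.sq_sqrt (by positivity)]
    congr 1
    funext i
    simp [PiLp.sub_apply, sq_abs]
  rw [hnorm, Finset.mul_sum, ← Finset.sum_add_distrib]
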